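/- Fix f ∈ (0, 1]. Define ψ(x) := (1 − (1−f)x)·h(fx/(1 − (1−f)x)) for x ∈ (0,1), where h is the binary entropy in nats. Then ψ is twice differentiable on (0,1) and ψ''(x) = −f/(x(1−x)(1 − (1−f)x)) < 0 for all x ∈ (0,1); in particular ψ is strictly concave on (0,1). -/

import Mathlib

/-- The binary entropy function in nats, with `0 · ln 0 = 0`. -/
noncomputable def binEnt (p : ℝ) : ℝ :=
  -(p * Real.log p) - (1 - p) * Real.log (1 - p)

/-- For `f ∈ (0,1]`, the function `ψ(x) = (1−(1−f)x) h(fx/(1−(1−f)x))` is twice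
differentiable on `(0,1)` with `ψ''(x) = −f/(x(1−x)(1−(1−f)x)) < 0`; in
particular `ψ` is strictly concave on `(0,1)`. -/
theorem stmt_12 (f : ℝ) (hf : f ∈ Set.Ioc (0 : ℝ) 1) :
    (∀ x ∈ Set.Ioo (0 : ℝ) 1,
      DifferentiableAt ℝ
          (fun x : ℝ => (1 - (1 - f) * x) * binEnt (f * x / (1 - (1 - f) * x))) x ∧
      DifferentiableAt ℝ
          (deriv (fun x : ℝ =>
            (1 - (1 - f) * x) * binEnt (f * x / (1 - (1 - f) * x)))) x ∧
      deriv (deriv (fun x : ℝ =>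
            (1 - (1 - f) * x) * binEnt (f * x / (1 - (1 - f) * x)))) x =
        -f / (x * (1 - x) * (1 - (1 - f) * x)) ∧
      deriv (deriv (fun x : ℝ =>
            (1 - (1 - f) * x) * binEnt (f * x / (1 - (1 - f) * x)))) x < 0) ∧
    StrictConcaveOn ℝ (Set.Ioo (0 : ℝ) 1)
      (fun x : ℝ => (1 - (1 - f) * x) * binEnt (f * x / (1 - (1 - f) * x))) := by
  obtain ⟨hf0, hf1⟩ := hf
  set ψ : ℝ → ℝ := fun x : ℝ => (1 - (1 - f) * x) * binEnt (f * x / (1 - (1 - f) * x))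
    with hψdef
  set g : ℝ → ℝ := fun x : ℝ =>
    -((f * x) * Real.log (f * x)) - (1 - x) * Real.log (1 - x)
      + (1 - (1 - f) * x) * Real.log (1 - (1 - f) * x) with hgdef
  set g₁ : ℝ → ℝ := fun x : ℝ =>
    -(f * Real.log (f * x)) + Real.log (1 - x) - (1 - f) * Real.log (1 - (1 - f) * x)
    with hg1def
  have hD : ∀ x ∈ Set.Ioo (0 : ℝ) 1, 0 < 1 - (1 - f) * x := by
    rintro x ⟨hx0, hx1⟩; nlinarith
  have heq : ∀ x ∈ Set.Ioo (0 : ℝ) 1, ψ x = g x := by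
    rintro x hx
    have hDx := hD x hx
    obtain ⟨hx0, hx1⟩ := hx
    have hfx : 0 < f * x := by positivity
    have h2 : 1 - f * x / (1 - (1 - f) * x) = (1 - x) / (1 - (1 - f) * x) := by
      rw [eq_div_iff hDx.ne', sub_mul, div_mul_cancel₀ _ hDx.ne']; ring
    simp only [hψdef, hgdef, binEnt, h2,
      Real.log_div hfx.ne' hDx.ne', Real.log_div (by linarith : (0:ℝ) < 1 - x).ne' hDx.ne']
    field_simp
    ring
  have hg' : ∀ x ∈ Set.Ioo (0 : ℝ) 1, HasDerivAt g (g₁ x) x := by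
    rintro x hx
    have hDx := hD x hx
    obtain ⟨hx0, hx1⟩ := hx
    have hfx : 0 < f * x := by positivity
    have h1x : (0:ℝ) < 1 - x := by linarith
    have ha : HasDerivAt (fun y : ℝ => f * y) f x := by
      simpa using (hasDerivAt_id x).const_mul f
    have hla : HasDerivAt (fun y : ℝ => Real.log (f * y)) ((f * x)⁻¹ * f) x :=
      (Real.hasDerivAt_log hfx.ne').comp x ha
    have hb : HasDerivAt (fun y : ℝ => 1 - y) (-1) x := by
      simpa using (hasDerivAt_id x).const_sub 1
    have hlb : HasDerivAt (fun y : ℝ => Real.log (1 - y)) ((1 - x)⁻¹ * (-1)) x :=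
      (Real.hasDerivAt_log h1x.ne').comp x hb
    have hc : HasDerivAt (fun y : ℝ => 1 - (1 - f) * y) (-(1 - f)) x := by
      simpa using ((hasDerivAt_id x).const_mul (1 - f)).const_sub 1
    have hlc : HasDerivAt (fun y : ℝ => Real.log (1 - (1 - f) * y))
        ((1 - (1 - f) * x)⁻¹ * (-(1 - f))) x :=
      by have := (Real.hasDerivAt_log hDx.ne').comp x hc; exact this
    have H := ((ha.mul hla).neg.sub (hb.mul hlb)).add (hc.mul hlc)
    refine (H : HasDerivAt g _ x).congr_deriv ?_
    rw [mul_inv_cancel_left₀ hfx.ne', mul_inv_cancel_left₀ h1x.ne', mul_inv_cancel_left₀ hDx.ne', hg1def]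
    ring
  have hg1' : ∀ x ∈ Set.Ioo (0 : ℝ) 1,
      HasDerivAt g₁ (-f / (x * (1 - x) * (1 - (1 - f) * x))) x := by
    rintro x hx
    have hDx := hD x hx
    obtain ⟨hx0, hx1⟩ := hx
    have hfx : 0 < f * x := by positivity
    have h1x : (0:ℝ) < 1 - x := by linarith
    have ha : HasDerivAt (fun y : ℝ => f * y) f x := by
      simpa using (hasDerivAt_id x).const_mul f
    have hla : HasDerivAt (fun y : ℝ => Real.log (f * y)) ((f * x)⁻¹ * f) x :=
      (Real.hasDerivAt_log hfx.ne').comp x ha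
    have hb : HasDerivAt (fun y : ℝ => 1 - y) (-1) x := by
      simpa using (hasDerivAt_id x).const_sub 1
    have hlb : HasDerivAt (fun y : ℝ => Real.log (1 - y)) ((1 - x)⁻¹ * (-1)) x :=
      (Real.hasDerivAt_log h1x.ne').comp x hb
    have hc : HasDerivAt (fun y : ℝ => 1 - (1 - f) * y) (-(1 - f)) x := by
      simpa using ((hasDerivAt_id x).const_mul (1 - f)).const_sub 1
    have hlc : HasDerivAt (fun y : ℝ => Real.log (1 - (1 - f) * y))
        ((1 - (1 - f) * x)⁻¹ * (-(1 - f))) x :=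
      by have := (Real.hasDerivAt_log hDx.ne').comp x hc; exact this
    have H := ((hla.const_mul f).neg.add hlb).sub (hlc.const_mul (1 - f))
    refine (H : HasDerivAt g₁ _ x).congr_deriv ?_
    have hD' : 1 - x * (1 - f) ≠ 0 := by nlinarith
    field_simp
    ring
  have hEv : ∀ x ∈ Set.Ioo (0 : ℝ) 1, ψ =ᶠ[nhds x] g := fun x hx =>
    Filter.eventuallyEq_of_mem (Ioo_mem_nhds hx.1 hx.2) heq
  have hψ' : ∀ x ∈ Set.Ioo (0 : ℝ) 1, HasDerivAt ψ (g₁ x) x := fun x hx =>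
    (hg' x hx).congr_of_eventuallyEq (hEv x hx)
  have hderiv : ∀ x ∈ Set.Ioo (0 : ℝ) 1, deriv ψ x = g₁ x := fun x hx =>
    (hψ' x hx).deriv
  have hψ'' : ∀ x ∈ Set.Ioo (0 : ℝ) 1,
      HasDerivAt (deriv ψ) (-f / (x * (1 - x) * (1 - (1 - f) * x))) x := fun x hx =>
    (hg1' x hx).congr_of_eventuallyEq
      (Filter.eventuallyEq_of_mem (Ioo_mem_nhds hx.1 hx.2) hderiv)
  have hneg : ∀ x ∈ Set.Ioo (0 : ℝ) 1,
      -f / (x * (1 - x) * (1 - (1 - f) * x)) < 0 := by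
    rintro x hx
    have hDx := hD x hx
    obtain ⟨hx0, hx1⟩ := hx
    apply div_neg_of_neg_of_pos (by linarith)
    have : (0:ℝ) < 1 - x := by linarith
    positivity
  refine ⟨fun x hx => ⟨(hψ' x hx).differentiableAt, (hψ'' x hx).differentiableAt,
    (hψ'' x hx).deriv, by rw [(hψ'' x hx).deriv]; exact hneg x hx⟩, ?_⟩
  apply strictConcaveOn_of_deriv2_neg (convex_Ioo 0 1)
  · exact fun x hx => ((hψ' x hx).differentiableAt.continuousAt).continuousWithinAt
  · intro x hx
    rw [interior_Ioo] at hx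
    have : deriv^[2] ψ x = deriv (deriv ψ) x := by
      simp [Function.iterate_succ, Function.iterate_one]
    rw [this, (hψ'' x hx).deriv]
    exact hneg x hx
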